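/- For d ≥ 2 and h ≥ 3, and any E ∈ (0, 1/2], there exists a fractional pebbling of the balanced d-ary tree of height h starting from the empty configuration, ending with black weight 2E on the root and zero weight elsewhere, such that the total weight never exceeds (d−1)h/2 + 1 + E. -/

import Mathlib

/-- Number of nodes of the complete d-ary tree of height h (levels 0..h-1). -/
def treeSize (d h : ℕ) : ℕ := ∑ k ∈ Finset.range h, d ^ k

/-- A fractional configuration: each node gets (black weight, white weight). -/
abbrev Cfg := ℕ → ℝ × ℝ

/-- Pebble weight of node i: b(i) + w(i). -/
def pw (c : Cfg) (i : ℕ) : ℝ := (c i).1 + (c i).2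

/-- Valid configuration: weights nonnegative, b(i)+w(i) ≤ 1, nothing outside the tree. -/
def Valid (n : ℕ) (c : Cfg) : Prop :=
  (∀ i, 0 ≤ (c i).1 ∧ 0 ≤ (c i).2 ∧ pw c i ≤ 1) ∧ (∀ i, n ≤ i → c i = (0, 0))

/-- Total pebble weight of a configuration. -/
def weight (n : ℕ) (c : Cfg) : ℝ := ∑ i ∈ Finset.range n, pw c i

/-- j is a child of i in heap indexing of the d-ary tree. -/
def child (d i j : ℕ) : Prop := ∃ k, k < d ∧ j = d * i + 1 + k

def isLeaf (d n i : ℕ) : Prop := i < n ∧ n ≤ d * i + 1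

/-- Every child of i has pebble weight 1. -/
def covered (d : ℕ) (c : Cfg) (i : ℕ) : Prop := ∀ j, child d i j → pw c j = 1

/-- Legal fractional pebbling moves: decrease black weight on any node; on a node
whose children all have pebble weight 1, set its white weight to 0 and increase its
black weight arbitrarily, optionally simultaneously decreasing children's black
weights (sliding); increase white weight on any node (subject to validity);
increase black weight on any leaf. -/
def Move (d n : ℕ) (c c' : Cfg) : Prop :=
  (∃ i, (c' i).1 ≤ (c i).1 ∧ (c' i).2 = (c i).2 ∧ ∀ j, j ≠ i → c' j = c j) ∨
  (∃ i, i < n ∧ covered d c i ∧ (c i).1 ≤ (c' i).1 ∧ (c' i).2 = 0 ∧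
    (∀ j, child d i j → (c' j).1 ≤ (c j).1 ∧ (c' j).2 = (c j).2) ∧
    (∀ j, j ≠ i → ¬ child d i j → c' j = c j)) ∨
  (∃ i, (c' i).1 = (c i).1 ∧ (c i).2 ≤ (c' i).2 ∧ ∀ j, j ≠ i → c' j = c j) ∨
  (∃ i, isLeaf d n i ∧ (c' i).2 = (c i).2 ∧ (c i).1 ≤ (c' i).1 ∧ ∀ j, j ≠ i → c' j = c j)

/-- A fractional pebbling: valid configurations connected by legal moves. -/
def Pebbling (d n T : ℕ) (c : ℕ → Cfg) : Prop :=
  (∀ t, t ≤ T → Valid n (c t)) ∧ (∀ t, t < T → Move d n (c t) (c (t + 1)))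

def EmptyCfg (c : Cfg) : Prop := ∀ i, c i = (0, 0)

/-- Root-pebbling: starts and ends empty; at some time the root has pebble weight 1. -/
def RootPebbling (d n T : ℕ) (c : ℕ → Cfg) : Prop :=
  Pebbling d n T c ∧ EmptyCfg (c 0) ∧ EmptyCfg (c T) ∧ ∃ t, t ≤ T ∧ pw (c t) 0 = 1

set_option maxHeartbeats 1600000

namespace FracAux

/-! ### tree index arithmetic -/

lemma treeSize_succ (d l : ℕ) : treeSize d (l+1) = treeSize d l + d ^ l := by
  simp [treeSize, Finset.sum_range_succ]

lemma treeSize_mono (d : ℕ) {l l' : ℕ} (h : l ≤ l') : treeSize d l ≤ treeSize d l' := by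
  unfold treeSize
  exact Finset.sum_le_sum_of_subset (Finset.range_subset_range.2 h)

lemma geo (d : ℕ) (hd : 1 ≤ d) : ∀ l, (d-1) * treeSize d l + 1 = d ^ l := by
  intro l; induction l with
  | zero => simp [treeSize]
  | succ l ih =>
    rw [treeSize_succ, pow_succ]
    have h1 : d - 1 + 1 = d := by omega
    calc (d-1) * (treeSize d l + d ^ l) + 1
        = ((d-1) * treeSize d l + 1) + (d-1) * d ^ l := by ring
      _ = d ^ l + (d-1) * d ^ l := by rw [ih]
      _ = d ^ l * d := by
          have : d ^ l + (d-1) * d^l = (1 + (d-1)) * d^l := by ring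
          rw [this]; rw [show 1 + (d-1) = d by omega]; ring

lemma treeSize_succ' (d : ℕ) (hd : 1 ≤ d) (l : ℕ) :
    treeSize d (l+1) = d * treeSize d l + 1 := by
  have h1 : d - 1 + 1 = d := by omega
  have h2 := geo d hd l
  have h4 := Nat.sub_one_mul d (treeSize d l)
  have h5 : treeSize d l ≤ d * treeSize d l := Nat.le_mul_of_pos_left _ hd
  rw [treeSize_succ]; omega

def Lv (d l v : ℕ) : Prop := treeSize d l ≤ v ∧ v < treeSize d (l+1)

lemma lv_child {d l v : ℕ} (hd : 1 ≤ d) (hv : Lv d l v) {k : ℕ} (hk : k < d) :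
    Lv d (l+1) (d*v+1+k) := by
  obtain ⟨h1, h2⟩ := hv
  have e1 := treeSize_succ' d hd l
  have e2 := treeSize_succ' d hd (l+1)
  have hm : d * treeSize d l ≤ d * v := Nat.mul_le_mul_left d h1
  have hm2 : d * (v+1) ≤ d * treeSize d (l+1) := Nat.mul_le_mul_left d h2
  have hd2 : d * v + d = d * (v+1) := by ring
  constructor
  · omega
  · omega

lemma lv_lt {d h l v : ℕ} (hv : Lv d l v) (hl : l < h) : v < treeSize d h :=
  lt_of_lt_of_le hv.2 (treeSize_mono d hl)

lemma lv_leaf {d h v : ℕ} (hd : 1 ≤ d) (hh : 1 ≤ h) (hv : Lv d (h-1) v) :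
    isLeaf d (treeSize d h) v := by
  obtain ⟨h1, h2⟩ := hv
  have e1 := treeSize_succ' d hd (h-1)
  have hm : d * treeSize d (h-1) ≤ d * v := Nat.mul_le_mul_left d h1
  have hh1 : h - 1 + 1 = h := by omega
  rw [hh1] at h2 e1
  exact ⟨h2, by omega⟩

/-! ### configuration builders -/

noncomputable def upd (c : Cfg) (i : ℕ) (p : ℝ × ℝ) : Cfg := fun j => if j = i then p else c j

noncomputable def updCh (d : ℕ) (c : Cfg) (i : ℕ) (p : ℝ × ℝ) : Cfg :=
  fun j => if j = i then p else if d*i+1 ≤ j ∧ j ≤ d*i+d then (0, (c j).2) else c j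

noncomputable def strip (s t : ℕ) (p : ℝ × ℝ) : Cfg := fun j => if s ≤ j ∧ j < t then p else 0

lemma add_apply (a b : Cfg) (j : ℕ) : (a + b) j = a j + b j := rfl

lemma pw_add (a b : Cfg) (j : ℕ) : pw (a + b) j = pw a j + pw b j := by
  simp only [pw, add_apply, Prod.fst_add, Prod.snd_add]; ring

lemma pw_zero (j : ℕ) : pw (0 : Cfg) j = 0 := by simp [pw]

lemma weight_add (n : ℕ) (a b : Cfg) : weight n (a + b) = weight n a + weight n b := by
  simp [weight, pw_add, Finset.sum_add_distrib]

lemma zero_apply (j : ℕ) : (0 : Cfg) j = (0, 0) := rfl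

lemma strip_in {s t : ℕ} (p : ℝ × ℝ) {j : ℕ} (h1 : s ≤ j) (h2 : j < t) : strip s t p j = p := by
  simp [strip, h1, h2]

lemma strip_out {s t : ℕ} (p : ℝ × ℝ) {j : ℕ} (h : j < s ∨ t ≤ j) : strip s t p j = (0, 0) := by
  have : ¬ (s ≤ j ∧ j < t) := by omega
  simp [strip, this]; rfl

lemma strip_empty {s t : ℕ} (p : ℝ × ℝ) (h : t ≤ s) : strip s t p = 0 := by
  funext j
  have : ¬ (s ≤ j ∧ j < t) := by omega
  simp only [strip, this, if_false]
  rfl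

lemma strip_snoc {s t : ℕ} (p : ℝ × ℝ) (h : s ≤ t) :
    strip s t p + strip t (t+1) p = strip s (t+1) p := by
  funext j
  by_cases h1 : j = t
  · subst h1
    rw [add_apply, strip_out p (by omega), strip_in p (le_refl _) (by omega),
      strip_in p h (by omega)]
    exact (zero_add p)
  · by_cases h2 : s ≤ j ∧ j < t
    · rw [add_apply, strip_in p h2.1 h2.2, strip_out p (by omega), strip_in p h2.1 (by omega)]
      simp
    · rw [add_apply, strip_out p (by omega), strip_out p (by omega), strip_out p (by omega)]
      simp

lemma pw_strip_le (s t : ℕ) (p : ℝ × ℝ) (j : ℕ) :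
    pw (strip s t p) j = if s ≤ j ∧ j < t then p.1 + p.2 else 0 := by
  by_cases h : s ≤ j ∧ j < t
  · simp [pw, strip, h]
  · simp [pw, strip, h]

lemma weight_strip {n s t : ℕ} (p : ℝ × ℝ) (hst : s ≤ t) (htn : t ≤ n) :
    weight n (strip s t p) = ((t : ℝ) - s) * (p.1 + p.2) := by
  unfold weight
  rw [Finset.sum_congr rfl (fun j _ => pw_strip_le s t p j)]
  rw [Finset.sum_ite, Finset.sum_const_zero, add_zero, Finset.sum_const]
  have hf : Finset.filter (fun j => s ≤ j ∧ j < t) (Finset.range n) = Finset.Ico s t := by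
    ext j
    simp [Finset.mem_Ico]
    omega
  rw [hf, Nat.card_Ico, nsmul_eq_mul]
  push_cast [hst]
  ring

lemma pair_zero : ((0, 0) : ℝ × ℝ) = 0 := rfl

lemma sum_indicator {n : ℕ} {i : ℕ} (hi : i < n) (f : ℕ → ℝ) :
    (∑ j ∈ Finset.range n, if j = i then f j else 0) = f i := by
  rw [Finset.sum_ite_eq' (Finset.range n) i f]
  simp [Finset.mem_range.2 hi]

lemma upd_same (c : Cfg) (i : ℕ) (p : ℝ × ℝ) : upd c i p i = p := by simp [upd]

lemma upd_other (c : Cfg) (i : ℕ) (p : ℝ × ℝ) {j : ℕ} (h : j ≠ i) : upd c i p j = c j := by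
  simp [upd, h]

lemma weight_upd {n : ℕ} (c : Cfg) {i : ℕ} (hi : i < n) (p : ℝ × ℝ) :
    weight n (upd c i p) = weight n c - pw c i + (p.1 + p.2) := by
  have key : ∀ j, pw (upd c i p) j = pw c j + (if j = i then (p.1 + p.2) - pw c j else 0) := by
    intro j; by_cases h : j = i
    · subst h; simp [upd, pw]
    · simp [upd, h, pw]
  unfold weight
  rw [Finset.sum_congr rfl fun j _ => key j, Finset.sum_add_distrib,
    sum_indicator hi (fun j => p.1 + p.2 - pw c j)]
  ring

lemma valid_upd {n : ℕ} {c : Cfg} (hc : Valid n c) {i : ℕ} (hi : i < n) {p : ℝ × ℝ}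
    (h1 : 0 ≤ p.1) (h2 : 0 ≤ p.2) (h3 : p.1 + p.2 ≤ 1) : Valid n (upd c i p) := by
  constructor
  · intro j; by_cases h : j = i
    · subst h; rw [upd_same]; exact ⟨h1, h2, by simpa [pw, upd] using h3⟩
    · rw [upd_other c i p h]
      have := (hc.1 j); exact ⟨this.1, this.2.1, by simpa [pw, upd, h] using this.2.2⟩
  · intro j hj
    have h : j ≠ i := by omega
    rw [upd_other c i p h]; exact hc.2 j hj

lemma move_upd_white {d n : ℕ} {c : Cfg} {i : ℕ} {p : ℝ × ℝ}
    (h1 : p.1 = (c i).1) (h2 : (c i).2 ≤ p.2) : Move d n c (upd c i p) := by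
  refine Or.inr (Or.inr (Or.inl ⟨i, ?_, ?_, fun j hj => upd_other c i p hj⟩))
  · rw [upd_same]; exact h1
  · rw [upd_same]; exact h2

lemma move_upd_leaf {d n : ℕ} {c : Cfg} {i : ℕ} {p : ℝ × ℝ}
    (hl : isLeaf d n i) (h2 : p.2 = (c i).2) (h1 : (c i).1 ≤ p.1) : Move d n c (upd c i p) := by
  refine Or.inr (Or.inr (Or.inr ⟨i, hl, ?_, ?_, fun j hj => upd_other c i p hj⟩))
  · rw [upd_same]; exact h2
  · rw [upd_same]; exact h1

lemma child_iff {d i j : ℕ} (hd : 1 ≤ d) : child d i j ↔ (d*i+1 ≤ j ∧ j ≤ d*i+d) := by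
  constructor
  · rintro ⟨k, hk, rfl⟩; omega
  · intro h; exact ⟨j - (d*i+1), by omega, by omega⟩

lemma self_lt_child {d i : ℕ} (hd : 1 ≤ d) : i < d*i+1 := by
  have : i ≤ d * i := Nat.le_mul_of_pos_left i hd
  omega

lemma updCh_same (d : ℕ) (c : Cfg) (i : ℕ) (p : ℝ × ℝ) : updCh d c i p i = p := by
  simp [updCh]

lemma updCh_child (d : ℕ) (c : Cfg) {i : ℕ} (p : ℝ × ℝ) {j : ℕ}
    (h : d*i+1 ≤ j ∧ j ≤ d*i+d) (hij : j ≠ i) : updCh d c i p j = (0, (c j).2) := by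
  simp [updCh, hij, h]

lemma updCh_other (d : ℕ) (c : Cfg) {i : ℕ} (p : ℝ × ℝ) {j : ℕ}
    (hij : j ≠ i) (h : ¬ (d*i+1 ≤ j ∧ j ≤ d*i+d)) : updCh d c i p j = c j := by
  show (if j = i then p else if d*i+1 ≤ j ∧ j ≤ d*i+d then (0, (c j).2) else c j) = c j
  rw [if_neg hij, if_neg h]

lemma move_updCh {d n : ℕ} {c : Cfg} {i : ℕ} {p : ℝ × ℝ} (hd : 1 ≤ d)
    (hval : Valid n c) (hi : i < n) (hcov : covered d c i)
    (hb : (c i).1 ≤ p.1) (hp : p.2 = 0) : Move d n c (updCh d c i p) := by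
  refine Or.inr (Or.inl ⟨i, hi, hcov, ?_, ?_, ?_, ?_⟩)
  · rw [updCh_same]; exact hb
  · rw [updCh_same]; exact hp
  · intro j hj
    obtain ⟨hj1, hj2⟩ := (child_iff hd).1 hj
    have hij : j ≠ i := by have := self_lt_child (i := i) hd; omega
    rw [updCh_child d c p ⟨hj1, hj2⟩ hij]
    exact ⟨(hval.1 j).1, rfl⟩
  · intro j hj1 hj2
    exact updCh_other d c p hj1 (fun hc => hj2 ((child_iff hd).2 hc))

lemma valid_updCh {d n : ℕ} {c : Cfg} (hval : Valid n c) {i : ℕ} (hi : i < n) {p : ℝ × ℝ}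
    (h1 : 0 ≤ p.1) (h2 : 0 ≤ p.2) (h3 : p.1 + p.2 ≤ 1) : Valid n (updCh d c i p) := by
  constructor
  · intro j
    by_cases h : j = i
    · subst h; rw [updCh_same]; exact ⟨h1, h2, by simpa [pw, updCh] using h3⟩
    · by_cases h' : d*i+1 ≤ j ∧ j ≤ d*i+d
      · have hj := updCh_child d c p h' h
        have hv := hval.1 j
        have hpw : (c j).1 + (c j).2 ≤ 1 := hv.2.2
        simp only [pw, hj]
        exact ⟨le_refl 0, hv.2.1, by show (0:ℝ) + (c j).2 ≤ 1; linarith [hv.1]⟩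
      · have hj := updCh_other d c p h h'
        have hv := hval.1 j
        simp only [pw, hj] at *
        exact hv
  · intro j hj
    have h : j ≠ i := by omega
    by_cases h' : d*i+1 ≤ j ∧ j ≤ d*i+d
    · rw [updCh_child d c p h' h, hval.2 j hj]
    · rw [updCh_other d c p h h']; exact hval.2 j hj

lemma weight_updCh_le {d n : ℕ} {c : Cfg} (hval : Valid n c) {i : ℕ} (hi : i < n) (p : ℝ × ℝ) :
    weight n (updCh d c i p) ≤ weight n c - pw c i + (p.1 + p.2) := by
  have key : ∀ j, pw (updCh d c i p) j ≤ pw c j + (if j = i then (p.1 + p.2) - pw c j else 0) := by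
    intro j; by_cases h : j = i
    · subst h; simp [updCh, pw]
    · by_cases h' : d*i+1 ≤ j ∧ j ≤ d*i+d
      · have hj := updCh_child d c p h' h
        have := (hval.1 j).1
        simp only [pw, hj, if_neg h, add_zero]
        show (0:ℝ) + (c j).2 ≤ (c j).1 + (c j).2
        linarith
      · have hj := updCh_other d c p h h'
        simp [pw, hj, h]
  calc weight n (updCh d c i p) ≤ ∑ j ∈ Finset.range n, (pw c j + (if j = i then (p.1 + p.2) - pw c j else 0)) :=
        Finset.sum_le_sum (fun j _ => key j)
    _ = weight n c - pw c i + (p.1 + p.2) := by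
        rw [Finset.sum_add_distrib, sum_indicator hi (fun j => p.1 + p.2 - pw c j)]
        unfold weight; ring

lemma upd_add_right {a : Cfg} (R : Cfg) {i : ℕ} (ha : a i = (0,0)) (p : ℝ × ℝ) :
    upd (a + R) i p = a + upd R i p := by
  funext j
  by_cases h : j = i
  · subst h; rw [upd_same, add_apply, upd_same, ha, pair_zero, zero_add]
  · rw [upd_other _ _ _ h, add_apply, add_apply, upd_other _ _ _ h]

lemma updCh_add_right {d : ℕ} {R1 : Cfg} (R2 : Cfg) {i : ℕ} (h1 : R1 i = (0,0))
    (h2 : ∀ j, d*i+1 ≤ j → j ≤ d*i+d → R1 j = (0,0)) (p : ℝ × ℝ) :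
    updCh d (R1 + R2) i p = R1 + updCh d R2 i p := by
  funext j
  by_cases h : j = i
  · subst h; rw [updCh_same, add_apply, updCh_same, h1, pair_zero, zero_add]
  · by_cases h' : d*i+1 ≤ j ∧ j ≤ d*i+d
    · simp only [add_apply, updCh_child _ _ _ h' h, h2 j h'.1 h'.2, pair_zero, zero_add]
    · rw [updCh_other _ _ _ h h', add_apply, add_apply, updCh_other _ _ _ h h']

lemma upd_strip {s t : ℕ} (p : ℝ × ℝ) (h : s ≤ t) :
    upd (strip s t p) t p = strip s (t+1) p := by
  funext j
  by_cases h1 : j = t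
  · subst h1; rw [upd_same, strip_in p h (by omega)]
  · rw [upd_other _ _ _ h1]
    by_cases h2 : s ≤ j ∧ j < t
    · rw [strip_in p h2.1 h2.2, strip_in p h2.1 (by omega)]
    · rw [strip_out p (by omega), strip_out p (by omega)]

/-! ### the recursive states -/

noncomputable def leftState (d : ℕ) : ℕ → ℝ → ℕ → Cfg
  | 0, _, _ => 0
  | g+1, x, v => strip (d*v+1) (d*v+d) (0, 1-x) + leftState d g (1/2) (d*v+d)

noncomputable def covState (d : ℕ) : ℕ → ℝ → ℕ → Cfg
  | 0, _, v => strip (d*v+1) (d*v+d+1) (1,0)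
  | g+1, x, v => strip (d*v+1) (d*v+d) (x,1-x) +
      (strip (d*v+d) (d*v+d+1) (1,0) + leftState d g (1/2) (d*v+d))

lemma leftState_zero (d : ℕ) (x : ℝ) (v : ℕ) : leftState d 0 x v = 0 := rfl

lemma leftState_succ (d g : ℕ) (x : ℝ) (v : ℕ) :
    leftState d (g+1) x v = strip (d*v+1) (d*v+d) (0, 1-x) + leftState d g (1/2) (d*v+d) := rfl

lemma covState_zero (d : ℕ) (x : ℝ) (v : ℕ) :
    covState d 0 x v = strip (d*v+1) (d*v+d+1) (1,0) := rfl

lemma covState_succ (d g : ℕ) (x : ℝ) (v : ℕ) :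
    covState d (g+1) x v = strip (d*v+1) (d*v+d) (x,1-x) +
      (strip (d*v+d) (d*v+d+1) (1,0) + leftState d g (1/2) (d*v+d)) := rfl

lemma le_mul_self_add {d v c : ℕ} (hd : 1 ≤ d) : d*v + c ≤ d*(d*v+c) :=
  Nat.le_mul_of_pos_left _ hd

lemma leftState_low {d : ℕ} (hd : 1 ≤ d) : ∀ g x v j, j ≤ d*v → leftState d g x v j = (0,0) := by
  intro g
  induction g with
  | zero => intro x v j _; rfl
  | succ g ih =>
    intro x v j hj
    show (strip (d*v+1) (d*v+d) (0, 1-x) + leftState d g (1/2) (d*v+d)) j = (0,0)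
    rw [add_apply, strip_out _ (by omega), ih _ _ _ (by have := le_mul_self_add (v := v) (c := d) hd; omega),
      pair_zero, zero_add]

lemma covState_low {d : ℕ} (hd : 1 ≤ d) : ∀ g x v j, j ≤ d*v → covState d g x v j = (0,0) := by
  intro g; cases g with
  | zero => intro x v j hj; exact strip_out _ (by omega)
  | succ g =>
    intro x v j hj
    show (strip (d*v+1) (d*v+d) (x,1-x) + (strip (d*v+d) (d*v+d+1) (1,0) + leftState d g (1/2) (d*v+d))) j = (0,0)
    rw [add_apply, add_apply, strip_out _ (by omega), strip_out _ (by omega),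
      leftState_low hd _ _ _ _ (by have := le_mul_self_add (v := v) (c := d) hd; omega)]
    simp

lemma leftState_high {d h : ℕ} (hd : 1 ≤ d) :
    ∀ g x {l v}, Lv d l v → l + g + 1 ≤ h → ∀ j, treeSize d h ≤ j → leftState d g x v j = (0,0) := by
  intro g
  induction g with
  | zero => intro x l v _ _ j _; rfl
  | succ g ih =>
    intro x l v hlv hle j hj
    have hch : Lv d (l+1) (d*v+d) := by
      have := lv_child hd hlv (k := d-1) (by omega)
      have he : d*v+1+(d-1) = d*v+d := by omega
      rwa [he] at this
    have hlt : d*v+d < treeSize d h := lv_lt hch (by omega)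
    show (strip (d*v+1) (d*v+d) (0, 1-x) + leftState d g (1/2) (d*v+d)) j = (0,0)
    rw [add_apply, strip_out _ (by omega), ih (1/2) hch (by omega) j hj, pair_zero, zero_add]

lemma covState_high {d h : ℕ} (hd : 1 ≤ d) :
    ∀ g x {l v}, Lv d l v → l + g + 2 ≤ h → ∀ j, treeSize d h ≤ j → covState d g x v j = (0,0) := by
  intro g
  cases g with
  | zero =>
    intro x l v hlv hle j hj
    have hch : Lv d (l+1) (d*v+d) := by
      have := lv_child hd hlv (k := d-1) (by omega)
      have he : d*v+1+(d-1) = d*v+d := by omega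
      rwa [he] at this
    have hlt : d*v+d < treeSize d h := lv_lt hch (by omega)
    exact strip_out _ (by omega)
  | succ g =>
    intro x l v hlv hle j hj
    have hch : Lv d (l+1) (d*v+d) := by
      have := lv_child hd hlv (k := d-1) (by omega)
      have he : d*v+1+(d-1) = d*v+d := by omega
      rwa [he] at this
    have hlt : d*v+d < treeSize d h := lv_lt hch (by omega)
    show (strip (d*v+1) (d*v+d) (x,1-x) + (strip (d*v+d) (d*v+d+1) (1,0) + leftState d g (1/2) (d*v+d))) j = (0,0)
    rw [add_apply, add_apply, strip_out _ (by omega), strip_out _ (by omega),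
      leftState_high hd g (1/2) hch (by omega) j hj]
    simp

lemma leftState_cases {d : ℕ} (hd : 1 ≤ d) :
    ∀ g x v j, leftState d g x v j = (0,0) ∨ leftState d g x v j = (0, 1-x) ∨
      leftState d g x v j = (0, (1/2 : ℝ)) := by
  intro g
  induction g with
  | zero => intro x v j; left; rfl
  | succ g ih =>
    intro x v j
    rw [leftState_succ]
    by_cases hj : d*v+1 ≤ j ∧ j < d*v+d
    · right; left
      rw [add_apply, strip_in _ hj.1 hj.2,
        leftState_low hd _ _ _ _ (by have := le_mul_self_add (v := v) (c := d) hd; omega)]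
      simp
    · rw [add_apply, strip_out _ (by omega), pair_zero, zero_add]
      rcases ih (1/2) (d*v+d) j with h | h | h
      · left; exact h
      · right; right; rw [h]; norm_num
      · right; right; exact h

lemma covState_cases {d : ℕ} (hd : 1 ≤ d) :
    ∀ g x v j, covState d g x v j = (0,0) ∨ covState d g x v j = (x, 1-x) ∨
      covState d g x v j = ((1 : ℝ), (0 : ℝ)) ∨ covState d g x v j = (0, (1/2 : ℝ)) := by
  intro g
  cases g with
  | zero =>
    intro x v j
    by_cases hj : d*v+1 ≤ j ∧ j < d*v+d+1
    · right; right; left; exact strip_in _ hj.1 hj.2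
    · left; exact strip_out _ (by omega)
  | succ g =>
    intro x v j
    rw [covState_succ]
    have hls0 : ∀ j', j' ≤ d*(d*v+d) → leftState d g (1/2) (d*v+d) j' = (0,0) :=
      fun j' hj' => leftState_low hd _ _ _ _ hj'
    by_cases hj : d*v+1 ≤ j ∧ j < d*v+d
    · right; left
      rw [add_apply, add_apply, strip_in _ hj.1 hj.2, strip_out _ (by omega),
        hls0 j (by have := le_mul_self_add (v := v) (c := d) hd; omega)]
      simp
    · by_cases hj2 : j = d*v+d
      · right; right; left
        subst hj2
        rw [add_apply, add_apply, strip_out _ (by omega), strip_in _ (le_refl _) (by omega),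
          hls0 (d*v+d) (le_mul_self_add hd)]
        simp
      · rw [add_apply, add_apply, strip_out _ (by omega), strip_out _ (by omega),
          pair_zero, zero_add, zero_add]
        rcases leftState_cases hd g (1/2) (d*v+d) j with h | h | h
        · left; exact h
        · right; right; right; rw [h]; norm_num
        · right; right; right; exact h

lemma pw_pair (a b : ℝ) (c : Cfg) (j : ℕ) (h : c j = (a, b)) : pw c j = a + b := by
  simp [pw, h]

lemma covered_covState {d : ℕ} (hd : 1 ≤ d) (g : ℕ) (x : ℝ) (v : ℕ) (a : Cfg)
    (hz : ∀ j, d*v+1 ≤ j → a j = (0,0)) : covered d (a + covState d g x v) v := by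
  intro j hj
  obtain ⟨hj1, hj2⟩ := (child_iff hd).1 hj
  have hpa : pw a j = 0 := by rw [pw_pair 0 0 a j (hz j hj1)]; ring
  rw [pw_add, hpa]
  cases g with
  | zero =>
    rw [pw_pair 1 0 _ j (by rw [covState_zero]; exact strip_in _ hj1 (by omega))]
    ring
  | succ g =>
    by_cases hlt : j < d*v+d
    · rw [pw_pair x (1-x) _ j ?_]
      · ring
      · rw [covState_succ, add_apply, add_apply, strip_in _ hj1 hlt, strip_out _ (by omega),
          leftState_low hd _ _ _ _ (by have := le_mul_self_add (v := v) (c := d) hd; omega)]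
        simp
    · have hje : j = d*v+d := by omega
      subst hje
      rw [pw_pair 1 0 _ _ ?_]
      · ring
      · rw [covState_succ, add_apply, add_apply, strip_out _ (by omega),
          strip_in _ (le_refl _) (by omega), leftState_low hd _ _ _ _ (le_mul_self_add hd)]
        simp

lemma covState_eq_leftState_outside {d : ℕ} (hd : 1 ≤ d) (g : ℕ) (x : ℝ) (v : ℕ) {j : ℕ}
    (hj : ¬ (d*v+1 ≤ j ∧ j ≤ d*v+d)) : covState d g x v j = leftState d g x v j := by
  cases g with
  | zero =>
    rw [covState_zero, leftState_zero, strip_out _ (by omega)]; rfl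
  | succ g =>
    rw [covState_succ, leftState_succ, add_apply, add_apply, add_apply,
      strip_out _ (by omega), strip_out _ (by omega), strip_out _ (by omega)]
    simp

lemma updCh_covState {d : ℕ} (hd : 1 ≤ d) (g : ℕ) (x : ℝ) (v : ℕ) (p : ℝ × ℝ) :
    updCh d (covState d g x v) v p = strip v (v+1) p + leftState d g x v := by
  have hv : v < d*v+1 := self_lt_child hd
  funext j
  by_cases h : j = v
  · subst h
    rw [updCh_same, add_apply, strip_in _ (le_refl _) (by omega),
      leftState_low hd _ _ _ _ (by omega)]
    simp
  · by_cases h' : d*v+1 ≤ j ∧ j ≤ d*v+d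
    · rw [updCh_child _ _ _ h' h, add_apply, strip_out _ (by omega)]
      cases g with
      | zero =>
        rw [covState_zero, leftState_zero, strip_in _ h'.1 (by omega)]
        simp

      | succ g =>
        have hlow : leftState d g (1/2) (d*v+d) j = (0,0) :=
          leftState_low hd _ _ _ _ (by have := le_mul_self_add (v := v) (c := d) hd; omega)
        by_cases hlt : j < d*v+d
        · rw [covState_succ, leftState_succ, add_apply, add_apply, add_apply,
            strip_in _ h'.1 hlt, strip_out _ (by omega), strip_in _ h'.1 hlt, hlow]
          simp
        · have hje : j = d*v+d := by omega
          subst hje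
          rw [covState_succ, leftState_succ, add_apply, add_apply, add_apply,
            strip_out _ (by omega), strip_in _ (le_refl _) (by omega), strip_out _ (by omega), hlow]
          simp
    · rw [updCh_other _ _ _ h h', add_apply, strip_out _ (by omega),
        covState_eq_leftState_outside hd g x v h']
      simp

lemma weight_zero (n : ℕ) : weight n (0 : Cfg) = 0 := by
  simp [weight, pw_zero]

def okp (p : ℝ × ℝ) : Prop := 0 ≤ p.1 ∧ 0 ≤ p.2 ∧ p.1 + p.2 ≤ 1

lemma valid_add_delta {n d v : ℕ} {a δ : Cfg} (ha : Valid n a)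
    (hz : ∀ j, d*v+1 ≤ j → a j = (0,0))
    (hlow : ∀ j, j ≤ d*v → δ j = (0,0))
    (hhigh : ∀ j, n ≤ j → δ j = (0,0))
    (hok : ∀ j, okp (δ j)) : Valid n (a + δ) := by
  constructor
  · intro j
    by_cases h : j ≤ d*v
    · have : (a + δ) j = a j := by rw [add_apply, hlow j h, pair_zero, add_zero]
      have hv := ha.1 j
      refine ⟨by rw [this]; exact hv.1, by rw [this]; exact hv.2.1, ?_⟩
      rw [show pw (a + δ) j = pw a j by simp [pw, this]]
      exact hv.2.2
    · have : (a + δ) j = δ j := by rw [add_apply, hz j (by omega), pair_zero, zero_add]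
      have hv := hok j
      exact ⟨by rw [this]; exact hv.1, by rw [this]; exact hv.2.1,
        by rw [show pw (a + δ) j = (δ j).1 + (δ j).2 by simp [pw, this]]; exact hv.2.2⟩
  · intro j hj
    rw [add_apply, ha.2 j hj, hhigh j hj, pair_zero, add_zero]

lemma lv_child' {d l v : ℕ} (hd : 1 ≤ d) (hv : Lv d l v) : Lv d (l+1) (d*v+d) := by
  have := lv_child hd hv (k := d-1) (by omega)
  have he : d*v+1+(d-1) = d*v+d := by omega
  rwa [he] at this

lemma weight_leftState_half {d h : ℕ} (hd : 1 ≤ d) :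
    ∀ g {l v}, Lv d l v → l + g + 1 ≤ h →
    weight (treeSize d h) (leftState d g (1/2) v) = (g:ℝ) * ((d:ℝ)-1) / 2 := by
  intro g
  induction g with
  | zero => intro l v _ _; rw [leftState_zero, weight_zero]; simp
  | succ g ih =>
    intro l v hlv hle
    have hch := lv_child' hd hlv
    have hlt : d*v+d < treeSize d h := lv_lt hch (by omega)
    rw [leftState_succ, weight_add, weight_strip _ (by omega) (by omega), ih hch (by omega)]
    push_cast
    ring

lemma weight_leftState_succ {d h : ℕ} (hd : 1 ≤ d) (g : ℕ) (x : ℝ) {l v : ℕ}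
    (hlv : Lv d l v) (hle : l + g + 2 ≤ h) :
    weight (treeSize d h) (leftState d (g+1) x v) =
      ((d:ℝ)-1) * (1-x) + (g:ℝ) * ((d:ℝ)-1) / 2 := by
  have hch := lv_child' hd hlv
  have hlt : d*v+d < treeSize d h := lv_lt hch (by omega)
  rw [leftState_succ, weight_add, weight_strip _ (by omega) (by omega),
    weight_leftState_half hd g hch (by omega)]
  push_cast
  ring

lemma weight_covState {d h : ℕ} (hd : 1 ≤ d) (g : ℕ) (x : ℝ) {l v : ℕ}
    (hlv : Lv d l v) (hle : l + g + 2 ≤ h) :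
    weight (treeSize d h) (covState d g x v) =
      (d:ℝ) + ((g - 1 : ℕ):ℝ) * ((d:ℝ)-1) / 2 := by
  have hch := lv_child' hd hlv
  have hlt : d*v+d < treeSize d h := lv_lt hch (by omega)
  cases g with
  | zero =>
    rw [covState_zero, weight_strip _ (by omega) (by omega)]
    push_cast
    ring
  | succ g =>
    rw [covState_succ, weight_add, weight_add, weight_strip _ (by omega) (by omega),
      weight_strip _ (by omega) (by omega), weight_leftState_half hd g hch (by omega)]
    have : (g + 1 - 1 : ℕ) = g := by omega
    rw [this]
    push_cast
    ring

/-! ### move sequences -/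

def exec (a : Cfg) (fs : List (Cfg → Cfg)) : Cfg := fs.foldl (fun c f => f c) a

lemma exec_nil (a : Cfg) : exec a [] = a := rfl

lemma exec_cons (a : Cfg) (f : Cfg → Cfg) (fs : List (Cfg → Cfg)) :
    exec a (f :: fs) = exec (f a) fs := rfl

lemma exec_append (a : Cfg) (l1 l2 : List (Cfg → Cfg)) :
    exec a (l1 ++ l2) = exec (exec a l1) l2 := List.foldl_append

def Ok (d n : ℕ) (B : ℝ) : Cfg → List (Cfg → Cfg) → Prop
  | _, [] => True
  | a, f :: fs => (Move d n a (f a) ∧ Valid n (f a) ∧ weight n (f a) ≤ B) ∧ Ok d n B (f a) fs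

lemma ok_nil (d n : ℕ) (B : ℝ) (a : Cfg) : Ok d n B a [] := trivial

lemma ok_cons {d n : ℕ} {B : ℝ} {a : Cfg} {f : Cfg → Cfg} {fs : List (Cfg → Cfg)}
    (h1 : Move d n a (f a)) (h2 : Valid n (f a)) (h3 : weight n (f a) ≤ B)
    (h4 : Ok d n B (f a) fs) : Ok d n B a (f :: fs) := ⟨⟨h1, h2, h3⟩, h4⟩

lemma ok_append {d n : ℕ} {B : ℝ} : ∀ {l1 l2 : List (Cfg → Cfg)} {a : Cfg},
    Ok d n B a l1 → Ok d n B (exec a l1) l2 → Ok d n B a (l1 ++ l2) := by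
  intro l1
  induction l1 with
  | nil => intro l2 a _ h2; exact h2
  | cons f fs ih =>
    intro l2 a h1 h2
    exact ⟨h1.1, ih h1.2 h2⟩

lemma ok_mono {d n : ℕ} {B B' : ℝ} (hB : B ≤ B') : ∀ {l : List (Cfg → Cfg)} {a : Cfg},
    Ok d n B a l → Ok d n B' a l := by
  intro l
  induction l with
  | nil => intro a _; trivial
  | cons f fs ih => intro a h; exact ⟨⟨h.1.1, h.1.2.1, le_trans h.1.2.2 hB⟩, ih h.2⟩

lemma ok_single {d n : ℕ} {B : ℝ} {a : Cfg} {f : Cfg → Cfg}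
    (h1 : Move d n a (f a)) (h2 : Valid n (f a)) (h3 : weight n (f a) ≤ B) :
    Ok d n B a [f] := ⟨⟨h1, h2, h3⟩, trivial⟩

lemma ok_pebbling {d n : ℕ} {B : ℝ} : ∀ (fs : List (Cfg → Cfg)) (a : Cfg),
    Ok d n B a fs → Valid n a → weight n a ≤ B →
    (∀ t, Valid n (exec a (fs.take t)) ∧ weight n (exec a (fs.take t)) ≤ B) ∧
    (∀ t, t < fs.length → Move d n (exec a (fs.take t)) (exec a (fs.take (t+1)))) := by
  intro fs
  induction fs with
  | nil =>
    intro a _ hv hw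
    refine ⟨fun t => ?_, fun t ht => (by simp at ht)⟩
    simp [exec_nil, List.take_nil]
    exact ⟨hv, hw⟩
  | cons f fs ih =>
    intro a hok hv hw
    obtain ⟨⟨hm, hv', hw'⟩, hok'⟩ := hok
    have IH := ih (f a) hok' hv' hw'
    constructor
    · intro t
      cases t with
      | zero => simp [exec_nil]; exact ⟨hv, hw⟩
      | succ t =>
        rw [List.take_succ_cons, exec_cons]
        exact IH.1 t
    · intro t ht
      cases t with
      | zero =>
        simp only [List.take_succ_cons, List.take_zero, exec_nil, exec_cons]
        exact hm
      | succ t =>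
        rw [List.take_succ_cons, List.take_succ_cons, exec_cons, exec_cons]
        exact IH.2 t (by simpa using ht)

/-! ### the pebbling procedures -/

mutual
noncomputable def covSteps (d : ℕ) : ℕ → ℝ → ℕ → List (Cfg → Cfg)
  | 0, _, v => (List.range d).map (fun k => fun c => upd c (d*v+1+k) (1,0))
  | g+1, x, v =>
    ((List.range (d-1)).map (fun k =>
        covSteps d g (1/2) (d*v+1+k) ++
          ((fun c => updCh d c (d*v+1+k) (x,0)) :: discSteps d g (1/2) (d*v+1+k)))).flatten
    ++ (covSteps d g (1/2) (d*v+d)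
    ++ ((fun c => updCh d c (d*v+d) (1,0))
      :: (List.range (d-1)).map (fun k => fun c => upd c (d*v+1+k) (x, 1-x))))

noncomputable def discSteps (d : ℕ) : ℕ → ℝ → ℕ → List (Cfg → Cfg)
  | 0, _, _ => []
  | g+1, x, v =>
    discSteps d g (1/2) (d*v+d)
    ++ ((List.range (d-1)).map (fun k =>
        covSteps d g (1/2) (d*v+1+k) ++
          ((fun c => updCh d c (d*v+1+k) (0,0)) :: discSteps d g (1/2) (d*v+1+k)))).flatten
end

lemma strip_zero_pair (s t : ℕ) : strip s t ((0:ℝ), (0:ℝ)) = 0 := by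
  funext j
  by_cases h : s ≤ j ∧ j < t
  · rw [strip_in _ h.1 h.2]; rfl
  · rw [strip_out _ (by omega)]; rfl

lemma strip_cons {s t : ℕ} (p : ℝ × ℝ) (h : s < t) :
    strip s t p = strip s (s+1) p + strip (s+1) t p := by
  funext j
  by_cases h1 : j = s
  · subst h1
    rw [add_apply, strip_in p (le_refl _) h, strip_in p (le_refl _) (by omega),
      strip_out p (by omega)]
    simp
  · by_cases h2 : s+1 ≤ j ∧ j < t
    · rw [add_apply, strip_in p (by omega) h2.2, strip_out p (by omega), strip_in p h2.1 h2.2]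
      simp
    · rw [add_apply, strip_out p (by omega), strip_out p (by omega), strip_out p (by omega)]
      simp

lemma upd_shift {s m t : ℕ} (p q : ℝ × ℝ) (R : Cfg) (hsm : s ≤ m) (hmt : m < t) (hR : R m = (0,0)) :
    upd (strip s m p + (strip m t q + R)) m p = strip s (m+1) p + (strip (m+1) t q + R) := by
  funext j
  by_cases h1 : j = m
  · subst h1
    rw [upd_same, add_apply, add_apply, strip_in p hsm (by omega), strip_out q (by omega), hR]
    simp
  · rw [upd_other _ _ _ h1, add_apply, add_apply, add_apply, add_apply]
    congr 1
    · by_cases h2 : s ≤ j ∧ j < m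
      · rw [strip_in p h2.1 h2.2, strip_in p h2.1 (by omega)]
      · rw [strip_out p (by omega), strip_out p (by omega)]
    · congr 1
      by_cases h3 : m+1 ≤ j ∧ j < t
      · rw [strip_in q (by omega) h3.2, strip_in q h3.1 h3.2]
      · rw [strip_out q (by omega), strip_out q (by omega)]

lemma updCh_covState' {d : ℕ} (hd : 1 ≤ d) (g : ℕ) (x : ℝ) (w : ℝ × ℝ) (v : ℕ) (p : ℝ × ℝ) :
    updCh d (strip v (v+1) w + covState d g x v) v p = strip v (v+1) p + leftState d g x v := by
  have hv : v < d*v+1 := self_lt_child hd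
  funext j
  by_cases h : j = v
  · subst h
    rw [updCh_same, add_apply, strip_in _ (le_refl _) (by omega),
      leftState_low hd _ _ _ _ (by omega)]
    simp
  · have hw0 : strip v (v+1) w j = (0,0) := strip_out _ (by omega)
    have hp0 : strip v (v+1) p j = (0,0) := strip_out _ (by omega)
    by_cases h' : d*v+1 ≤ j ∧ j ≤ d*v+d
    · rw [updCh_child _ _ _ h' h]
      simp only [add_apply, hw0, hp0, pair_zero, zero_add]
      cases g with
      | zero =>
        rw [covState_zero, leftState_zero, strip_in _ h'.1 (by omega)]
        simp
      | succ g =>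
        have hlow : leftState d g (1/2) (d*v+d) j = (0,0) :=
          leftState_low hd _ _ _ _ (by have := le_mul_self_add (v := v) (c := d) hd; omega)
        by_cases hlt : j < d*v+d
        · rw [covState_succ, leftState_succ, add_apply, add_apply, add_apply,
            strip_in _ h'.1 hlt, strip_out _ (by omega), strip_in _ h'.1 hlt, hlow]
          simp
        · have hje : j = d*v+d := by omega
          subst hje
          rw [covState_succ, leftState_succ, add_apply, add_apply, add_apply,
            strip_out _ (by omega), strip_in _ (le_refl _) (by omega), strip_out _ (by omega), hlow]
          simp
    · rw [updCh_other _ _ _ h h']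
      simp only [add_apply, hw0, hp0, pair_zero, zero_add]
      exact covState_eq_leftState_outside hd g x v h'

lemma ok_exec_valid {d n : ℕ} {B : ℝ} : ∀ {l : List (Cfg → Cfg)} {a : Cfg},
    Ok d n B a l → Valid n a → Valid n (exec a l) := by
  intro l
  induction l with
  | nil => intro a _ hv; exact hv
  | cons f fs ih => intro a h hv; exact ih h.2 h.1.2.1

lemma okp_leftState {d : ℕ} (hd : 1 ≤ d) (g : ℕ) {x : ℝ} (hx : 1/2 ≤ x) (hx1 : x ≤ 1)
    (v : ℕ) : ∀ j, okp (leftState d g x v j) := by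
  intro j
  rcases leftState_cases hd g x v j with h | h | h <;> rw [h] <;> unfold okp <;> norm_num <;>
    constructor <;> linarith

lemma covSteps_zero (d : ℕ) (x : ℝ) (v : ℕ) :
    covSteps d 0 x v = (List.range d).map (fun k => fun c => upd c (d*v+1+k) (1,0)) := by
  rw [covSteps]

lemma covSteps_succ (d g : ℕ) (x : ℝ) (v : ℕ) :
    covSteps d (g+1) x v =
    ((List.range (d-1)).map (fun k =>
        covSteps d g (1/2) (d*v+1+k) ++
          ((fun c => updCh d c (d*v+1+k) (x,0)) :: discSteps d g (1/2) (d*v+1+k)))).flatten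
    ++ (covSteps d g (1/2) (d*v+d)
    ++ ((fun c => updCh d c (d*v+d) (1,0))
      :: (List.range (d-1)).map (fun k => fun c => upd c (d*v+1+k) (x, 1-x)))) := by
  rw [covSteps]

lemma discSteps_zero (d : ℕ) (x : ℝ) (v : ℕ) : discSteps d 0 x v = [] := by
  rw [discSteps]

lemma discSteps_succ (d g : ℕ) (x : ℝ) (v : ℕ) :
    discSteps d (g+1) x v =
    discSteps d g (1/2) (d*v+d)
    ++ ((List.range (d-1)).map (fun k =>
        covSteps d g (1/2) (d*v+1+k) ++
          ((fun c => updCh d c (d*v+1+k) (0,0)) :: discSteps d g (1/2) (d*v+1+k)))).flatten := by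
  rw [discSteps]

lemma okp_strip {p : ℝ × ℝ} (hp : okp p) (s t : ℕ) : ∀ j, okp (strip s t p j) := by
  intro j
  by_cases h : s ≤ j ∧ j < t
  · rw [strip_in _ h.1 h.2]; exact hp
  · rw [strip_out _ (by omega)]; exact ⟨le_refl 0, le_refl 0, by norm_num⟩

lemma gap {d v k : ℕ} (hd : 1 ≤ d) : d*v+d ≤ d*(d*v+1+k) := by
  have h1 : v ≤ d*v := Nat.le_mul_of_pos_left v hd
  have h2 : d*(v+1) ≤ d*(d*v+1+k) := Nat.mul_le_mul_left d (by omega)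
  have h3 : d*(v+1) = d*v+d := by ring
  omega

lemma hz_shift {d v k s t : ℕ} {a : Cfg} {p : ℝ × ℝ} (hd : 1 ≤ d)
    (hz : ∀ j, d*v+1 ≤ j → a j = (0,0)) (ht : t ≤ d*v+d) :
    ∀ j, d*(d*v+1+k)+1 ≤ j → (a + strip s t p) j = (0,0) := by
  intro j hj
  have h3 := gap (v := v) (k := k) hd
  rw [add_apply, hz j (by omega), strip_out _ (by omega)]
  simp

noncomputable def Bc (d g : ℕ) (x : ℝ) : ℝ := ((d:ℝ)-1)*x + ((g:ℝ)-1)*((d:ℝ)-1)/2 + d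
noncomputable def Bd (d g : ℕ) (x : ℝ) : ℝ := ((d:ℝ)-1)*(1-x) + ((g:ℝ)-1)*((d:ℝ)-1)/2 + d

theorem main_spec (d h : ℕ) (hd : 2 ≤ d) : ∀ g,
  (∀ (x : ℝ) (l v : ℕ) (a : Cfg), 1/2 ≤ x → x ≤ 1 → Lv d l v → l + g + 2 = h →
    Valid (treeSize d h) a → (∀ j, d*v+1 ≤ j → a j = (0,0)) →
    Ok d (treeSize d h) (weight (treeSize d h) a + Bc d g x) a (covSteps d g x v) ∧
    exec a (covSteps d g x v) = a + covState d g x v) ∧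
  (∀ (x : ℝ) (l v : ℕ) (a : Cfg), 1/2 ≤ x → x ≤ 1 → Lv d l v → l + g + 2 = h →
    Valid (treeSize d h) a → (∀ j, d*v+1 ≤ j → a j = (0,0)) →
    Ok d (treeSize d h) (weight (treeSize d h) a + Bd d g x) (a + leftState d g x v) (discSteps d g x v) ∧
    exec (a + leftState d g x v) (discSteps d g x v) = a) := by
  intro g
  induction g with
  | zero =>
    constructor
    · intro x l v a hx hx1 hlv hlg hva hz
      have hd1 : 1 ≤ d := by omega
      have hch : ∀ k, k < d → Lv d (l+1) (d*v+1+k) := fun k hk => lv_child hd1 hlv hk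
      have hlf : ∀ k, k < d → isLeaf d (treeSize d h) (d*v+1+k) := by
        intro k hk
        have h1 := hch k hk
        have hl1 : l + 1 = h - 1 := by omega
        rw [hl1] at h1
        exact lv_leaf hd1 (by omega) h1
      have hchn : ∀ k, k < d → d*v+1+k < treeSize d h := fun k hk => lv_lt (hch k hk) (by omega)
      have hdvd : d*v+d < treeSize d h := by have := hchn (d-1) (by omega); omega
      have key : ∀ K, K ≤ d →
          Ok d (treeSize d h) (weight (treeSize d h) a + Bc d 0 x) a
            ((List.range K).map (fun k => fun c => upd c (d*v+1+k) ((1:ℝ),(0:ℝ)))) ∧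
          exec a ((List.range K).map (fun k => fun c => upd c (d*v+1+k) ((1:ℝ),(0:ℝ)))) =
            a + strip (d*v+1) (d*v+1+K) (1,0) := by
        intro K
        induction K with
        | zero =>
          intro _
          refine ⟨trivial, ?_⟩
          rw [List.range_zero, List.map_nil, exec_nil, strip_empty _ (by omega), add_zero]
        | succ K ihK =>
          intro hK
          obtain ⟨okK, exK⟩ := ihK (by omega)
          rw [List.range_succ, List.map_append, List.map_singleton]
          have heKu : (a + strip (d*v+1) (d*v+1+K) ((1:ℝ),(0:ℝ))) (d*v+1+K) = (0,0) := by
            rw [add_apply, hz _ (by omega), strip_out _ (by omega)]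
            simp
          have hval_eK : Valid (treeSize d h) (a + strip (d*v+1) (d*v+1+K) ((1:ℝ),(0:ℝ))) := by
            refine valid_add_delta (d := d) (v := v) hva hz ?_ ?_ ?_
            · intro j hj; exact strip_out _ (by omega)
            · intro j hj; exact strip_out _ (by omega)
            · exact okp_strip ⟨by norm_num, by norm_num, by norm_num⟩ _ _
          have hwK : weight (treeSize d h) (a + strip (d*v+1) (d*v+1+K) ((1:ℝ),(0:ℝ))) =
              weight (treeSize d h) a + (K:ℝ) := by
            rw [weight_add, weight_strip _ (by omega) (by omega)]
            push_cast
            ring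
          have hstep : upd (a + strip (d*v+1) (d*v+1+K) ((1:ℝ),(0:ℝ))) (d*v+1+K) (1,0) =
              a + strip (d*v+1) (d*v+1+(K+1)) (1,0) := by
            rw [upd_add_right _ (hz _ (by omega)), upd_strip _ (by omega),
              show d*v+1+(K+1) = d*v+1+K+1 by omega]
          refine ⟨ok_append okK ?_, ?_⟩
          · rw [exK]
            refine ok_single ?_ ?_ ?_
            · exact move_upd_leaf (hlf K (by omega)) (by rw [heKu]) (by rw [heKu]; norm_num)
            · exact valid_upd hval_eK (hchn K (by omega)) (by norm_num) (by norm_num) (by norm_num)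
            · rw [weight_upd _ (hchn K (by omega)), hwK, pw_pair 0 0 _ _ heKu]
              have hK' : (K:ℝ) ≤ (d:ℝ) - 1 := by
                have : (K:ℝ) + 1 ≤ (d:ℝ) := by exact_mod_cast hK
                linarith
              have hd2 : (2:ℝ) ≤ (d:ℝ) := by exact_mod_cast hd
              unfold Bc
              push_cast
              nlinarith
          · rw [exec_append, exK, exec_cons, exec_nil, hstep]
      obtain ⟨okC, exC⟩ := key d (le_refl d)
      rw [covSteps_zero]
      refine ⟨okC, ?_⟩
      rw [exC, covState_zero]
      have he : d*v+1+d = d*v+d+1 := by omega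
      rw [he]
    · intro x l v a hx hx1 hlv hlg hva hz
      rw [discSteps_zero, leftState_zero, add_zero]
      exact ⟨trivial, exec_nil a⟩
  | succ g ih =>
    obtain ⟨ihc, ihd⟩ := ih
    have hd1 : 1 ≤ d := by omega
    have hd2 : (2:ℝ) ≤ (d:ℝ) := by exact_mod_cast hd
    have hg0 : (0:ℝ) ≤ (g:ℝ) := by positivity
    constructor
    · -- cov, fuel g+1
      intro x l v a hx hx1 hlv hlg hva hz
      have hx0 : (0:ℝ) ≤ x := by linarith
      have hch : ∀ k, k < d → Lv d (l+1) (d*v+1+k) := fun k hk => lv_child hd1 hlv hk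
      have hchn : ∀ k, k < d → d*v+1+k < treeSize d h := fun k hk => lv_lt (hch k hk) (by omega)
      have hdvd : d*v+d < treeSize d h := by have := hchn (d-1) (by omega); omega
      have hchd : Lv d (l+1) (d*v+d) := lv_child' hd1 hlv
      have hokp : okp ((x, (0:ℝ))) := ⟨hx0, le_refl 0, by simpa using hx1⟩
      have WA := weight (treeSize d h) a
      -- the first d-1 children
      have Q : ∀ K, K ≤ d-1 →
          Ok d (treeSize d h) (weight (treeSize d h) a + Bc d (g+1) x) a
            (((List.range K).map (fun k =>
              covSteps d g (1/2) (d*v+1+k) ++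
                ((fun c => updCh d c (d*v+1+k) (x,0)) :: discSteps d g (1/2) (d*v+1+k)))).flatten) ∧
          exec a (((List.range K).map (fun k =>
              covSteps d g (1/2) (d*v+1+k) ++
                ((fun c => updCh d c (d*v+1+k) (x,0)) :: discSteps d g (1/2) (d*v+1+k)))).flatten) =
            a + strip (d*v+1) (d*v+1+K) (x,0) := by
        intro K
        induction K with
        | zero =>
          intro _
          refine ⟨trivial, ?_⟩
          rw [List.range_zero, List.map_nil, List.flatten_nil, exec_nil,
            strip_empty _ (by omega), add_zero]
        | succ K ihK =>
          intro hK
          obtain ⟨okK, exK⟩ := ihK (by omega)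
          have hKd : (K:ℝ) + 1 ≤ (d:ℝ) - 1 := by
            have : (K:ℝ) + 1 ≤ ((d:ℕ):ℝ) - 1 := by
              have h2 : K + 2 ≤ d := by omega
              have := (Nat.cast_le (α := ℝ)).2 h2
              push_cast at this
              linarith
            exact this
          have hKn : d*v+1+K < treeSize d h := hchn K (by omega)
          have hgapK := gap (v := v) (k := K) hd1
          -- ambient after K children
          have valK : Valid (treeSize d h) (a + strip (d*v+1) (d*v+1+K) (x,0)) := by
            refine valid_add_delta (d := d) (v := v) hva hz ?_ ?_ (okp_strip hokp _ _)
            · intro j hj; exact strip_out _ (by omega)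
            · intro j hj; exact strip_out _ (by omega)
          have hzK : ∀ j, d*(d*v+1+K)+1 ≤ j → (a + strip (d*v+1) (d*v+1+K) (x,0)) j = (0,0) :=
            hz_shift hd1 hz (by omega)
          have wformK : weight (treeSize d h) (a + strip (d*v+1) (d*v+1+K) (x,0)) =
              weight (treeSize d h) a + (K:ℝ)*x := by
            rw [weight_add, weight_strip _ (by omega) (by omega)]
            push_cast; ring
          obtain ⟨okc, exc⟩ := ihc (1/2) (l+1) (d*v+1+K) (a + strip (d*v+1) (d*v+1+K) (x,0))
            (le_refl _) (by norm_num) (hch K (by omega)) (by omega) valK hzK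
          have okc' : Ok d (treeSize d h) (weight (treeSize d h) a + Bc d (g+1) x)
              (a + strip (d*v+1) (d*v+1+K) (x,0)) (covSteps d g (1/2) (d*v+1+K)) := by
            refine ok_mono ?_ okc
            rw [wformK]; unfold Bc; push_cast; nlinarith
          have valc1 : Valid (treeSize d h)
              ((a + strip (d*v+1) (d*v+1+K) (x,0)) + covState d g (1/2) (d*v+1+K)) := by
            rw [← exc]; exact ok_exec_valid okc valK
          have hc1u : ((a + strip (d*v+1) (d*v+1+K) (x,0)) + covState d g (1/2) (d*v+1+K))
              (d*v+1+K) = (0,0) := by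
            rw [add_apply, add_apply, hz _ (by omega), strip_out _ (by omega),
              covState_low hd1 _ _ _ _ (Nat.le_mul_of_pos_left _ hd1)]
            simp
          have hmove : Move d (treeSize d h)
              ((a + strip (d*v+1) (d*v+1+K) (x,0)) + covState d g (1/2) (d*v+1+K))
              (updCh d ((a + strip (d*v+1) (d*v+1+K) (x,0)) + covState d g (1/2) (d*v+1+K))
                (d*v+1+K) (x,0)) :=
            move_updCh hd1 valc1 hKn
              (covered_covState hd1 g (1/2) (d*v+1+K) _ hzK)
              (by rw [hc1u]; exact hx0) rfl
          have hslide : updCh d ((a + strip (d*v+1) (d*v+1+K) (x,0)) + covState d g (1/2) (d*v+1+K))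
              (d*v+1+K) (x,0) =
              (a + strip (d*v+1) (d*v+1+(K+1)) (x,0)) + leftState d g (1/2) (d*v+1+K) := by
            rw [updCh_add_right _ (by rw [add_apply, hz _ (by omega), strip_out _ (by omega)]; simp)
              (fun j hj1 hj2 => hzK j hj1) (x,0),
              updCh_covState hd1 g (1/2) (d*v+1+K) (x,0), ← add_assoc, add_assoc a _ _,
              strip_snoc _ (by omega), show d*v+1+K+1 = d*v+1+(K+1) by omega]
          have valK1 : Valid (treeSize d h) (a + strip (d*v+1) (d*v+1+(K+1)) (x,0)) := by
            refine valid_add_delta (d := d) (v := v) hva hz ?_ ?_ (okp_strip hokp _ _)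
            · intro j hj; exact strip_out _ (by omega)
            · intro j hj; exact strip_out _ (by omega)
          have hzK1 : ∀ j, d*(d*v+1+K)+1 ≤ j → (a + strip (d*v+1) (d*v+1+(K+1)) (x,0)) j = (0,0) :=
            hz_shift hd1 hz (by omega)
          have wformK1 : weight (treeSize d h) (a + strip (d*v+1) (d*v+1+(K+1)) (x,0)) =
              weight (treeSize d h) a + ((K:ℝ)+1)*x := by
            rw [weight_add, weight_strip _ (by omega) (by omega)]
            push_cast; ring
          have wls : weight (treeSize d h) (leftState d g (1/2) (d*v+1+K)) =
              (g:ℝ) * ((d:ℝ)-1) / 2 :=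
            weight_leftState_half hd1 g (hch K (by omega)) (by omega)
          have hwslide : weight (treeSize d h)
              ((a + strip (d*v+1) (d*v+1+(K+1)) (x,0)) + leftState d g (1/2) (d*v+1+K)) ≤
              weight (treeSize d h) a + Bc d (g+1) x := by
            rw [weight_add, wformK1, wls]; unfold Bc; push_cast; nlinarith
          obtain ⟨okd, exd⟩ := ihd (1/2) (l+1) (d*v+1+K) (a + strip (d*v+1) (d*v+1+(K+1)) (x,0))
            (le_refl _) (by norm_num) (hch K (by omega)) (by omega) valK1 hzK1
          have okd' : Ok d (treeSize d h) (weight (treeSize d h) a + Bc d (g+1) x)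
              ((a + strip (d*v+1) (d*v+1+(K+1)) (x,0)) + leftState d g (1/2) (d*v+1+K))
              (discSteps d g (1/2) (d*v+1+K)) := by
            refine ok_mono ?_ okd
            rw [wformK1]; unfold Bd Bc; push_cast; nlinarith
          rw [List.range_succ, List.map_append, List.map_singleton, List.flatten_append,
            List.flatten_cons, List.flatten_nil, List.append_nil]
          constructor
          · refine ok_append okK ?_
            rw [exK]
            refine ok_append okc' ?_
            rw [exc]
            refine ok_cons hmove ?_ ?_ ?_
            · exact valid_updCh valc1 hKn hx0 (le_refl 0) (by simpa using hx1)
            · rw [hslide]; exact hwslide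
            · rw [hslide]; exact okd'
          · rw [exec_append, exK, exec_append, exc, exec_cons, hslide, exd]
      -- after the loop, the last child
      obtain ⟨okQ, exQ⟩ := Q (d-1) (le_refl _)
      have hidx : d*v+1+(d-1) = d*v+d := by omega
      rw [hidx] at exQ
      have valD : Valid (treeSize d h) (a + strip (d*v+1) (d*v+d) (x,0)) := by
        refine valid_add_delta (d := d) (v := v) hva hz ?_ ?_ (okp_strip hokp _ _)
        · intro j hj; exact strip_out _ (by omega)
        · intro j hj; exact strip_out _ (by omega)
      have hzD : ∀ j, d*(d*v+d)+1 ≤ j → (a + strip (d*v+1) (d*v+d) (x,0)) j = (0,0) := by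
        have := hz_shift (k := d-1) (s := d*v+1) (t := d*v+d) (p := ((x:ℝ),(0:ℝ))) hd1 hz (by omega)
        rw [hidx] at this
        exact this
      have wformD : weight (treeSize d h) (a + strip (d*v+1) (d*v+d) (x,0)) =
          weight (treeSize d h) a + ((d:ℝ)-1)*x := by
        rw [weight_add, weight_strip _ (by omega) (by omega)]
        push_cast; ring
      obtain ⟨okc, exc⟩ := ihc (1/2) (l+1) (d*v+d) (a + strip (d*v+1) (d*v+d) (x,0))
        (le_refl _) (by norm_num) hchd (by omega) valD hzD
      have okc' : Ok d (treeSize d h) (weight (treeSize d h) a + Bc d (g+1) x)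
          (a + strip (d*v+1) (d*v+d) (x,0)) (covSteps d g (1/2) (d*v+d)) := by
        refine ok_mono ?_ okc
        rw [wformD]; unfold Bc; push_cast; nlinarith
      have valc3 : Valid (treeSize d h)
          ((a + strip (d*v+1) (d*v+d) (x,0)) + covState d g (1/2) (d*v+d)) := by
        rw [← exc]; exact ok_exec_valid okc valD
      have hc3u : ((a + strip (d*v+1) (d*v+d) (x,0)) + covState d g (1/2) (d*v+d)) (d*v+d) = (0,0) := by
        rw [add_apply, add_apply, hz _ (by omega), strip_out _ (by omega),
          covState_low hd1 _ _ _ _ (Nat.le_mul_of_pos_left _ hd1)]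
        simp
      have hmoveL : Move d (treeSize d h)
          ((a + strip (d*v+1) (d*v+d) (x,0)) + covState d g (1/2) (d*v+d))
          (updCh d ((a + strip (d*v+1) (d*v+d) (x,0)) + covState d g (1/2) (d*v+d)) (d*v+d) (1,0)) :=
        move_updCh hd1 valc3 hdvd
          (covered_covState hd1 g (1/2) (d*v+d) _ hzD)
          (by rw [hc3u]; norm_num) rfl
      have hslideL : updCh d ((a + strip (d*v+1) (d*v+d) (x,0)) + covState d g (1/2) (d*v+d))
          (d*v+d) (1,0) =
          a + (strip (d*v+1) (d*v+d) (x,0) +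
            (strip (d*v+d) (d*v+d+1) (1,0) + leftState d g (1/2) (d*v+d))) := by
        rw [updCh_add_right _ (by rw [add_apply, hz _ (by omega), strip_out _ (by omega)]; simp)
          (fun j hj1 hj2 => hzD j hj1) (1,0),
          updCh_covState hd1 g (1/2) (d*v+d) (1,0), add_assoc]
      have wlsD : weight (treeSize d h) (leftState d g (1/2) (d*v+d)) = (g:ℝ) * ((d:ℝ)-1) / 2 :=
        weight_leftState_half hd1 g hchd (by omega)
      have wc4 : weight (treeSize d h)
          (a + (strip (d*v+1) (d*v+d) (x,0) +
            (strip (d*v+d) (d*v+d+1) (1,0) + leftState d g (1/2) (d*v+d)))) =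
          weight (treeSize d h) a + (((d:ℝ)-1)*x + (1 + (g:ℝ) * ((d:ℝ)-1) / 2)) := by
        rw [weight_add, weight_add, weight_add, weight_strip _ (by omega) (by omega),
          weight_strip _ (by omega) (by omega), wlsD]
        push_cast; ring
      have valc4 : Valid (treeSize d h)
          (a + (strip (d*v+1) (d*v+d) (x,0) +
            (strip (d*v+d) (d*v+d+1) (1,0) + leftState d g (1/2) (d*v+d)))) := by
        rw [← hslideL]
        exact valid_updCh valc3 hdvd (by norm_num) (by norm_num) (by norm_num)
      -- white raises
      have R : ∀ K, K ≤ d-1 →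
          Ok d (treeSize d h) (weight (treeSize d h) a + Bc d (g+1) x)
            (a + (strip (d*v+1) (d*v+d) (x,0) +
              (strip (d*v+d) (d*v+d+1) (1,0) + leftState d g (1/2) (d*v+d))))
            ((List.range K).map (fun k => fun c => upd c (d*v+1+k) (x, 1-x))) ∧
          exec (a + (strip (d*v+1) (d*v+d) (x,0) +
              (strip (d*v+d) (d*v+d+1) (1,0) + leftState d g (1/2) (d*v+d))))
            ((List.range K).map (fun k => fun c => upd c (d*v+1+k) (x, 1-x))) =
            a + (strip (d*v+1) (d*v+1+K) (x,1-x) + (strip (d*v+1+K) (d*v+d) (x,0) +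
              (strip (d*v+d) (d*v+d+1) (1,0) + leftState d g (1/2) (d*v+d)))) ∧
          Valid (treeSize d h)
            (a + (strip (d*v+1) (d*v+1+K) (x,1-x) + (strip (d*v+1+K) (d*v+d) (x,0) +
              (strip (d*v+d) (d*v+d+1) (1,0) + leftState d g (1/2) (d*v+d))))) := by
        intro K
        induction K with
        | zero =>
          intro _
          refine ⟨trivial, ?_, ?_⟩
          · rw [List.range_zero, List.map_nil, exec_nil, strip_empty (x,1-x) (by omega),
              zero_add, show d*v+1+0 = d*v+1 by omega]
          · rw [strip_empty (x,1-x) (by omega), zero_add, show d*v+1+0 = d*v+1 by omega]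
            exact valc4
        | succ K ihK =>
          intro hK
          obtain ⟨okK, exK, vaK⟩ := ihK (by omega)
          have hKd : (K:ℝ) + 1 ≤ (d:ℝ) - 1 := by
            have h2 : K + 2 ≤ d := by omega
            have := (Nat.cast_le (α := ℝ)).2 h2
            push_cast at this
            linarith
          have hRu : (strip (d*v+d) (d*v+d+1) ((1:ℝ),(0:ℝ)) + leftState d g (1/2) (d*v+d))
              (d*v+1+K) = (0,0) := by
            rw [add_apply, strip_out _ (by omega),
              leftState_low hd1 _ _ _ _ (by have := le_mul_self_add (v := v) (c := d) hd1; omega)]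
            simp
          have heu : (a + (strip (d*v+1) (d*v+1+K) (x,1-x) + (strip (d*v+1+K) (d*v+d) (x,0) +
              (strip (d*v+d) (d*v+d+1) (1,0) + leftState d g (1/2) (d*v+d))))) (d*v+1+K) = (x, 0) := by
            rw [add_apply, add_apply, add_apply, hz _ (by omega), strip_out (x,1-x) (by omega),
              strip_in (x,(0:ℝ)) (by omega) (by omega), hRu]
            simp
          have hstep : upd (a + (strip (d*v+1) (d*v+1+K) (x,1-x) + (strip (d*v+1+K) (d*v+d) (x,0) +
              (strip (d*v+d) (d*v+d+1) (1,0) + leftState d g (1/2) (d*v+d))))) (d*v+1+K) (x,1-x) =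
              a + (strip (d*v+1) (d*v+1+(K+1)) (x,1-x) + (strip (d*v+1+(K+1)) (d*v+d) (x,0) +
              (strip (d*v+d) (d*v+d+1) (1,0) + leftState d g (1/2) (d*v+d)))) := by
            rw [upd_add_right _ (hz _ (by omega)),
              upd_shift (x,1-x) (x,0) _ (by omega) (by omega) hRu,
              show d*v+1+K+1 = d*v+1+(K+1) by omega]
          have hmv : Move d (treeSize d h) _ _ := move_upd_white (d := d) (n := treeSize d h)
            (c := a + (strip (d*v+1) (d*v+1+K) (x,1-x) + (strip (d*v+1+K) (d*v+d) (x,0) +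
              (strip (d*v+d) (d*v+d+1) (1,0) + leftState d g (1/2) (d*v+d)))))
            (i := d*v+1+K) (p := (x,1-x))
            (by rw [heu]) (by rw [heu]; show (0:ℝ) ≤ 1-x; linarith)
          have wstep : weight (treeSize d h)
              (a + (strip (d*v+1) (d*v+1+(K+1)) (x,1-x) + (strip (d*v+1+(K+1)) (d*v+d) (x,0) +
              (strip (d*v+d) (d*v+d+1) (1,0) + leftState d g (1/2) (d*v+d))))) ≤
              weight (treeSize d h) a + Bc d (g+1) x := by
            rw [weight_add, weight_add, weight_add, weight_add,
              weight_strip _ (by omega) (by omega), weight_strip _ (by omega) (by omega),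
              weight_strip _ (by omega) (by omega), wlsD]
            unfold Bc; push_cast; nlinarith
          have vstep : Valid (treeSize d h)
              (a + (strip (d*v+1) (d*v+1+(K+1)) (x,1-x) + (strip (d*v+1+(K+1)) (d*v+d) (x,0) +
              (strip (d*v+d) (d*v+d+1) (1,0) + leftState d g (1/2) (d*v+d))))) := by
            rw [← hstep]
            exact valid_upd vaK (hchn K (by omega)) hx0
              (by show (0:ℝ) ≤ 1-x; linarith) (by show x + (1-x) ≤ 1; linarith)
          rw [List.range_succ, List.map_append, List.map_singleton]
          refine ⟨ok_append okK ?_, ?_, vstep⟩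
          · rw [exK]
            exact ok_single hmv (by rw [hstep]; exact vstep) (by rw [hstep]; exact wstep)
          · rw [exec_append, exK, exec_cons, exec_nil, hstep]
      obtain ⟨okR, exR, _⟩ := R (d-1) (le_refl _)
      rw [hidx] at exR
      rw [strip_empty ((x:ℝ),(0:ℝ)) (le_refl _), zero_add] at exR
      -- assemble
      rw [covSteps_succ]
      constructor
      · refine ok_append okQ ?_
        rw [exQ]
        refine ok_append okc' ?_
        rw [exc]
        refine ok_cons hmoveL ?_ ?_ ?_
        · rw [hslideL]; exact valc4
        · rw [hslideL, wc4]
          unfold Bc; push_cast; nlinarith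
        · rw [hslideL]; exact okR
      · rw [exec_append, exQ, exec_append, exc, exec_cons, hslideL, exR, covState_succ]
    · -- disc, fuel g+1
      intro x l v a hx hx1 hlv hlg hva hz
      have hx0 : (0:ℝ) ≤ x := by linarith
      have hch : ∀ k, k < d → Lv d (l+1) (d*v+1+k) := fun k hk => lv_child hd1 hlv hk
      have hchn : ∀ k, k < d → d*v+1+k < treeSize d h := fun k hk => lv_lt (hch k hk) (by omega)
      have hdvd : d*v+d < treeSize d h := by have := hchn (d-1) (by omega); omega
      have hchd : Lv d (l+1) (d*v+d) := lv_child' hd1 hlv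
      have hokpw : okp ((0:ℝ), 1-x) :=
        ⟨le_refl 0, by show (0:ℝ) ≤ 1-x; linarith, by show (0:ℝ) + (1-x) ≤ 1; linarith⟩
      have hsplit : a + leftState d (g+1) x v =
          (a + strip (d*v+1) (d*v+d) (0,1-x)) + leftState d g (1/2) (d*v+d) := by
        rw [leftState_succ, ← add_assoc]
      have valA1 : Valid (treeSize d h) (a + strip (d*v+1) (d*v+d) (0,1-x)) := by
        refine valid_add_delta (d := d) (v := v) hva hz ?_ ?_ (okp_strip hokpw _ _)
        · intro j hj; exact strip_out _ (by omega)
        · intro j hj; exact strip_out _ (by omega)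
      have hzA1 : ∀ j, d*(d*v+d)+1 ≤ j → (a + strip (d*v+1) (d*v+d) (0,1-x)) j = (0,0) := by
        have := hz_shift (k := d-1) (s := d*v+1) (t := d*v+d) (p := ((0:ℝ), 1-x)) hd1 hz (by omega)
        rw [show d*v+1+(d-1) = d*v+d by omega] at this
        exact this
      have wA1 : weight (treeSize d h) (a + strip (d*v+1) (d*v+d) (0,1-x)) =
          weight (treeSize d h) a + ((d:ℝ)-1)*(1-x) := by
        rw [weight_add, weight_strip _ (by omega) (by omega)]
        push_cast; ring
      obtain ⟨okd0, exd0⟩ := ihd (1/2) (l+1) (d*v+d) (a + strip (d*v+1) (d*v+d) (0,1-x))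
        (le_refl _) (by norm_num) hchd (by omega) valA1 hzA1
      have okd0' : Ok d (treeSize d h) (weight (treeSize d h) a + Bd d (g+1) x)
          ((a + strip (d*v+1) (d*v+d) (0,1-x)) + leftState d g (1/2) (d*v+d))
          (discSteps d g (1/2) (d*v+d)) := by
        refine ok_mono ?_ okd0
        rw [wA1]; unfold Bd; push_cast; nlinarith
      have S : ∀ K, K ≤ d-1 →
          Ok d (treeSize d h) (weight (treeSize d h) a + Bd d (g+1) x)
            (a + strip (d*v+1) (d*v+d) (0,1-x))
            (((List.range K).map (fun k =>
              covSteps d g (1/2) (d*v+1+k) ++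
                ((fun c => updCh d c (d*v+1+k) (0,0)) :: discSteps d g (1/2) (d*v+1+k)))).flatten) ∧
          exec (a + strip (d*v+1) (d*v+d) (0,1-x))
            (((List.range K).map (fun k =>
              covSteps d g (1/2) (d*v+1+k) ++
                ((fun c => updCh d c (d*v+1+k) (0,0)) :: discSteps d g (1/2) (d*v+1+k)))).flatten) =
            a + strip (d*v+1+K) (d*v+d) (0,1-x) := by
        intro K
        induction K with
        | zero =>
          intro _
          refine ⟨trivial, ?_⟩
          rw [List.range_zero, List.map_nil, List.flatten_nil, exec_nil,
            show d*v+1+0 = d*v+1 by omega]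
        | succ K ihK =>
          intro hK
          obtain ⟨okK, exK⟩ := ihK (by omega)
          have hKd : (K:ℝ) + 1 ≤ (d:ℝ) - 1 := by
            have h2 : K + 2 ≤ d := by omega
            have := (Nat.cast_le (α := ℝ)).2 h2
            push_cast at this
            linarith
          have hK0 : (0:ℝ) ≤ (K:ℝ) := by positivity
          have h1x : (0:ℝ) ≤ 1 - x := by linarith
          have hKn : d*v+1+K < treeSize d h := hchn K (by omega)
          have valbK : Valid (treeSize d h) (a + strip (d*v+1+K) (d*v+d) (0,1-x)) := by
            refine valid_add_delta (d := d) (v := v) hva hz ?_ ?_ (okp_strip hokpw _ _)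
            · intro j hj; exact strip_out _ (by omega)
            · intro j hj; exact strip_out _ (by omega)
          have hzbK : ∀ j, d*(d*v+1+K)+1 ≤ j →
              (a + strip (d*v+1+K) (d*v+d) (0,1-x)) j = (0,0) :=
            hz_shift hd1 hz (by omega)
          have wbK : weight (treeSize d h) (a + strip (d*v+1+K) (d*v+d) (0,1-x)) =
              weight (treeSize d h) a + ((d:ℝ)-1-(K:ℝ))*(1-x) := by
            rw [weight_add, weight_strip _ (by omega) (by omega)]
            push_cast; ring
          obtain ⟨okc, exc⟩ := ihc (1/2) (l+1) (d*v+1+K) (a + strip (d*v+1+K) (d*v+d) (0,1-x))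
            (le_refl _) (by norm_num) (hch K (by omega)) (by omega) valbK hzbK
          have okc' : Ok d (treeSize d h) (weight (treeSize d h) a + Bd d (g+1) x)
              (a + strip (d*v+1+K) (d*v+d) (0,1-x)) (covSteps d g (1/2) (d*v+1+K)) := by
            refine ok_mono ?_ okc
            rw [wbK]; unfold Bc Bd; push_cast; nlinarith
          have valc5 : Valid (treeSize d h)
              ((a + strip (d*v+1+K) (d*v+d) (0,1-x)) + covState d g (1/2) (d*v+1+K)) := by
            rw [← exc]; exact ok_exec_valid okc valbK
          have hc5u : ((a + strip (d*v+1+K) (d*v+d) (0,1-x)) + covState d g (1/2) (d*v+1+K))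
              (d*v+1+K) = (0, 1-x) := by
            rw [add_apply, add_apply, hz _ (by omega), strip_in _ (le_refl _) (by omega),
              covState_low hd1 _ _ _ _ (Nat.le_mul_of_pos_left _ hd1)]
            simp
          have hmoveD : Move d (treeSize d h)
              ((a + strip (d*v+1+K) (d*v+d) (0,1-x)) + covState d g (1/2) (d*v+1+K))
              (updCh d ((a + strip (d*v+1+K) (d*v+d) (0,1-x)) + covState d g (1/2) (d*v+1+K))
                (d*v+1+K) (0,0)) :=
            move_updCh hd1 valc5 hKn
              (covered_covState hd1 g (1/2) (d*v+1+K) _ hzbK)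
              (by rw [hc5u]) rfl
          have hslideD : updCh d ((a + strip (d*v+1+K) (d*v+d) (0,1-x)) + covState d g (1/2) (d*v+1+K))
              (d*v+1+K) (0,0) =
              (a + strip (d*v+1+(K+1)) (d*v+d) (0,1-x)) + leftState d g (1/2) (d*v+1+K) := by
            have hre : (a + strip (d*v+1+K) (d*v+d) (0,1-x)) + covState d g (1/2) (d*v+1+K) =
                (a + strip (d*v+1+(K+1)) (d*v+d) (0,1-x)) +
                  (strip (d*v+1+K) (d*v+1+K+1) (0,1-x) + covState d g (1/2) (d*v+1+K)) := by
              rw [strip_cons ((0:ℝ),1-x) (show d*v+1+K < d*v+d by omega),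
                show d*v+1+K+1 = d*v+1+(K+1) by omega]
              abel
            rw [hre, show d*v+1+(K+1) = d*v+1+K+1 by omega]
            rw [updCh_add_right _
              (by rw [add_apply, hz _ (by omega), strip_out _ (by omega)]; simp)
              (fun j hj1 hj2 => by
                have := hz_shift (k := K) (s := d*v+1+K+1) (t := d*v+d)
                  (p := ((0:ℝ),1-x)) hd1 hz (by omega) j hj1
                exact this) ((0:ℝ),(0:ℝ)),
              updCh_covState' hd1 g (1/2) (0,1-x) (d*v+1+K) (0,0), strip_zero_pair, zero_add]
          have valb1 : Valid (treeSize d h) (a + strip (d*v+1+(K+1)) (d*v+d) (0,1-x)) := by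
            refine valid_add_delta (d := d) (v := v) hva hz ?_ ?_ (okp_strip hokpw _ _)
            · intro j hj; exact strip_out _ (by omega)
            · intro j hj; exact strip_out _ (by omega)
          have hzb1 : ∀ j, d*(d*v+1+K)+1 ≤ j →
              (a + strip (d*v+1+(K+1)) (d*v+d) (0,1-x)) j = (0,0) :=
            hz_shift hd1 hz (by omega)
          have wb1 : weight (treeSize d h) (a + strip (d*v+1+(K+1)) (d*v+d) (0,1-x)) =
              weight (treeSize d h) a + ((d:ℝ)-2-(K:ℝ))*(1-x) := by
            rw [weight_add, weight_strip _ (by omega) (by omega)]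
            push_cast; ring
          have wls : weight (treeSize d h) (leftState d g (1/2) (d*v+1+K)) =
              (g:ℝ) * ((d:ℝ)-1) / 2 :=
            weight_leftState_half hd1 g (hch K (by omega)) (by omega)
          have hwD : weight (treeSize d h)
              ((a + strip (d*v+1+(K+1)) (d*v+d) (0,1-x)) + leftState d g (1/2) (d*v+1+K)) ≤
              weight (treeSize d h) a + Bd d (g+1) x := by
            rw [weight_add, wb1, wls]; unfold Bd; push_cast; nlinarith
          obtain ⟨okd, exd⟩ := ihd (1/2) (l+1) (d*v+1+K) (a + strip (d*v+1+(K+1)) (d*v+d) (0,1-x))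
            (le_refl _) (by norm_num) (hch K (by omega)) (by omega) valb1 hzb1
          have okd' : Ok d (treeSize d h) (weight (treeSize d h) a + Bd d (g+1) x)
              ((a + strip (d*v+1+(K+1)) (d*v+d) (0,1-x)) + leftState d g (1/2) (d*v+1+K))
              (discSteps d g (1/2) (d*v+1+K)) := by
            refine ok_mono ?_ okd
            rw [wb1]; unfold Bd; push_cast; nlinarith
          rw [List.range_succ, List.map_append, List.map_singleton, List.flatten_append,
            List.flatten_cons, List.flatten_nil, List.append_nil]
          constructor
          · refine ok_append okK ?_
            rw [exK]
            refine ok_append okc' ?_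
            rw [exc]
            refine ok_cons hmoveD ?_ ?_ ?_
            · exact valid_updCh valc5 hKn (le_refl 0) (le_refl 0) (by norm_num)
            · rw [hslideD]; exact hwD
            · rw [hslideD]; exact okd'
          · rw [exec_append, exK, exec_append, exc, exec_cons, hslideD, exd]
      obtain ⟨okS, exS⟩ := S (d-1) (le_refl _)
      rw [show d*v+1+(d-1) = d*v+d by omega] at exS
      rw [strip_empty ((0:ℝ),1-x) (le_refl _), add_zero] at exS
      rw [discSteps_succ]
      constructor
      · rw [hsplit]
        refine ok_append okd0' ?_
        rw [exd0]
        exact okS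
      · rw [exec_append, hsplit, exd0, exS]

lemma fst_le_pair {a b y z : ℝ} (hab : a ≤ b) : ((a,y) : ℝ × ℝ).1 ≤ ((b,z) : ℝ × ℝ).1 := hab

lemma strip_single_eq (m : ℕ) (p : ℝ × ℝ) {j : ℕ} :
    strip m (m+1) p j = if j = m then p else (0,0) := by
  by_cases h : j = m
  · subst h; rw [strip_in _ (le_refl _) (by omega), if_pos rfl]
  · rw [strip_out _ (by omega), if_neg h]

end FracAux

open FracAux in
/-- a fractional pebbling of the d-ary tree of height h ≥ 3 that
starts empty, ends with black weight 2E on the root and nothing elsewhere, and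
never exceeds weight (d-1)h/2 + 1 + E. -/
theorem frac_leave_black_on_root (d h : ℕ) (hd : 2 ≤ d) (hh : 3 ≤ h)
    (E : ℝ) (hE0 : 0 < E) (hE : E ≤ 1 / 2) :
    ∃ T c, Pebbling d (treeSize d h) T c ∧ EmptyCfg (c 0) ∧
      (c T) 0 = (2 * E, 0) ∧ (∀ i, i ≠ 0 → (c T) i = (0, 0)) ∧
      ∀ t, t ≤ T → weight (treeSize d h) (c t) ≤ ((d : ℝ) - 1) * h / 2 + 1 + E := by
  have hd1 : 1 ≤ d := by omega
  have hd2 : (2:ℝ) ≤ (d:ℝ) := by exact_mod_cast hd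
  have hdm1 : (0:ℝ) < (d:ℝ) - 1 := by linarith
  set x : ℝ := 1/2 + E/((d:ℝ)-1) with hxdef
  have hx : 1/2 ≤ x := by
    have : 0 ≤ E/((d:ℝ)-1) := div_nonneg (le_of_lt hE0) (le_of_lt hdm1)
    simp [hxdef]; linarith
  have hx1 : x ≤ 1 := by
    have h1 : E/((d:ℝ)-1) ≤ 1/2 := by
      rw [div_le_iff₀ hdm1]
      nlinarith
    simp [hxdef]; linarith
  have hEx : ((d:ℝ)-1) * x = ((d:ℝ)-1)/2 + E := by
    rw [hxdef, mul_add, mul_div_cancel₀ _ (ne_of_gt hdm1)]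
    ring
  have hcast2 : ((h-2 : ℕ):ℝ) = (h:ℝ) - 2 := by
    rw [Nat.cast_sub (by omega)]; norm_num
  have hcast3 : ((h-3 : ℕ):ℝ) = (h:ℝ) - 3 := by
    rw [Nat.cast_sub (by omega)]; norm_num
  have hh3 : (3:ℝ) ≤ (h:ℝ) := by exact_mod_cast hh
  set B : ℝ := ((d : ℝ) - 1) * h / 2 + 1 + E with hBdef
  have hlv0 : Lv d 0 0 := by
    constructor
    · simp [treeSize]
    · simp [treeSize]
  have hn1 : 1 ≤ treeSize d h := by
    have : treeSize d 1 ≤ treeSize d h := treeSize_mono d (by omega)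
    simp [treeSize] at this ⊢
    omega
  have hval0 : Valid (treeSize d h) (0 : Cfg) := by
    constructor
    · intro i
      refine ⟨le_refl _, le_refl _, ?_⟩
      rw [pw_zero]; norm_num
    · intro i _; rfl
  have hz0 : ∀ j, d*0+1 ≤ j → (0 : Cfg) j = (0,0) := fun j _ => rfl
  obtain ⟨okC, exC⟩ := (main_spec d h hd (h-2)).1 x 0 0 (0 : Cfg) hx hx1 hlv0 (by omega)
    hval0 hz0
  have hBc : weight (treeSize d h) (0 : Cfg) + Bc d (h-2) x = B := by
    rw [weight_zero]; unfold Bc; rw [hcast2, hBdef]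
    have : ((d:ℝ)-1)*x = ((d:ℝ)-1)/2 + E := hEx
    linarith [this]
  rw [hBc] at okC
  -- the root move
  have valc1 : Valid (treeSize d h) ((0 : Cfg) + covState d (h-2) x 0) := by
    rw [← exC]; exact ok_exec_valid okC hval0
  have hc10 : ((0 : Cfg) + covState d (h-2) x 0) 0 = (0,0) := by
    rw [FracAux.add_apply, covState_low hd1 _ _ _ _ (by omega)]
    simp
  have hmoveR : Move d (treeSize d h) ((0 : Cfg) + covState d (h-2) x 0)
      (updCh d ((0 : Cfg) + covState d (h-2) x 0) 0 (2*E, 0)) :=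
    move_updCh hd1 valc1 (by omega) (covered_covState hd1 (h-2) x 0 _ hz0)
      (by rw [hc10]; exact fst_le_pair (by linarith)) rfl
  have hroot : updCh d ((0 : Cfg) + covState d (h-2) x 0) 0 (2*E, 0) =
      strip 0 1 (2*E, 0) + leftState d (h-2) x 0 := by
    rw [updCh_add_right (R1 := (0:Cfg)) (covState d (h-2) x 0) (i := 0) rfl
        (fun j _ _ => rfl) (2*E, (0:ℝ)),
      updCh_covState hd1 (h-2) x 0 (2*E, 0), zero_add]
  have hvalR : Valid (treeSize d h) (strip 0 1 (2*E, 0) + leftState d (h-2) x 0) := by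
    rw [← hroot]
    refine valid_updCh valc1 (by omega) ?_ (le_refl 0) ?_
    · show (0:ℝ) ≤ (2*E, (0:ℝ)).1
      have h0 : (0:ℝ) ≤ 2*E := by linarith
      exact h0
    · show (2*E, (0:ℝ)).1 + (2*E, (0:ℝ)).2 ≤ 1
      have h0 : 2*E + 0 ≤ 1 := by linarith
      exact h0
  have hg23 : h - 2 = (h-3) + 1 := by omega
  have hwls : weight (treeSize d h) (leftState d (h-2) x 0) =
      ((d:ℝ)-1) * (1-x) + ((h-3 : ℕ):ℝ) * ((d:ℝ)-1) / 2 := by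
    rw [hg23]
    exact weight_leftState_succ hd1 (h-3) x hlv0 (by omega)
  have hwR : weight (treeSize d h) (strip 0 1 (2*E, 0) + leftState d (h-2) x 0) =
      2*E + (((d:ℝ)-1) * (1-x) + ((h:ℝ)-3) * ((d:ℝ)-1) / 2) := by
    rw [weight_add, weight_strip _ (by omega) (by omega), hwls, hcast3]
    push_cast
    ring
  have hwRB : weight (treeSize d h) (strip 0 1 (2*E, 0) + leftState d (h-2) x 0) ≤ B := by
    rw [hwR, hBdef]
    nlinarith [hEx]
  have hvalaR : Valid (treeSize d h) (strip 0 1 (2*E, (0:ℝ))) := by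
    constructor
    · exact okp_strip ⟨((by linarith : (0:ℝ) ≤ 2*E) : (0:ℝ) ≤ ((2*E,(0:ℝ)) : ℝ × ℝ).1),
        le_refl 0, ((by linarith : 2*E + 0 ≤ 1) : ((2*E,(0:ℝ)) : ℝ × ℝ).1 + ((2*E,(0:ℝ)) : ℝ × ℝ).2 ≤ 1)⟩ 0 1
    · intro i hi
      exact strip_out _ (by omega)
  have hzR : ∀ j, d*0+1 ≤ j → strip 0 1 (2*E, (0:ℝ)) j = (0,0) := by
    intro j hj
    exact strip_out _ (by omega)
  obtain ⟨okD, exD⟩ := (main_spec d h hd (h-2)).2 x 0 0 (strip 0 1 (2*E, 0)) hx hx1 hlv0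
    (by omega) hvalaR hzR
  have hwaR : weight (treeSize d h) (strip 0 1 (2*E, (0:ℝ))) = 2*E := by
    rw [weight_strip _ (by omega) (by omega)]
    push_cast; ring
  have hBd : weight (treeSize d h) (strip 0 1 (2*E, (0:ℝ))) + Bd d (h-2) x = B := by
    rw [hwaR]; unfold Bd; rw [hcast2, hBdef]
    nlinarith [hEx]
  rw [hBd] at okD
  -- assemble
  set steps := covSteps d (h-2) x 0 ++ ((fun c => updCh d c 0 (2*E, 0)) :: discSteps d (h-2) x 0)
    with hsteps
  have hOK : Ok d (treeSize d h) B (0 : Cfg) steps := by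
    refine ok_append okC ?_
    rw [exC]
    refine ok_cons hmoveR (by rw [hroot]; exact hvalR) (by rw [hroot]; exact hwRB) ?_
    rw [hroot]
    exact okD
  have hB0 : weight (treeSize d h) (0 : Cfg) ≤ B := by
    rw [weight_zero, hBdef]
    nlinarith
  obtain ⟨hVW, hM⟩ := ok_pebbling steps (0 : Cfg) hOK hval0 hB0
  have hTend : exec (0 : Cfg) (steps.take steps.length) = strip 0 1 (2*E, (0:ℝ)) := by
    rw [List.take_length, hsteps, exec_append, exC, exec_cons, hroot, exD]
  refine ⟨steps.length, fun t => exec (0 : Cfg) (steps.take t), ⟨fun t _ => (hVW t).1, hM⟩,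
    ?_, ?_, ?_, fun t _ => (hVW t).2⟩
  · intro i
    show exec (0 : Cfg) (steps.take 0) i = (0,0)
    rw [List.take_zero, exec_nil]
    rfl
  · show exec (0 : Cfg) (steps.take steps.length) 0 = (2*E, 0)
    rw [hTend, strip_single_eq, if_pos rfl]
  · intro i hi
    show exec (0 : Cfg) (steps.take steps.length) i = (0,0)
    rw [hTend, strip_single_eq, if_neg hi]
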